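/- arXiv:1709.00378 — 4 statements merged into one kernel-verified Lean document; each statement's English description precedes it below -/
import Mathlib

section
/- Let L ⊂ ℝⁿ be a full-rank lattice, 0 < α < 1/2, p a positive integer, and t ∈ ℝⁿ. Let y ∈ L satisfy ‖y − t‖ < p·α·λ1(L), and let r ∈ L be any lattice point with r − y ∈ pL. Then dist((r − t)/p, L) < α·λ1(L) (so, since α < 1/2, the closest lattice point to (r − t)/p is unique), and the unique closest lattice point c ∈ L to (r − t)/p satisfies y = r − p·c. -/
lemma lattice_sub_mem {n : ℕ} (B : Matrix (Fin n) (Fin n) ℝ)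
    (L : Set (EuclideanSpace ℝ (Fin n)))
    (hL : L = {v | ∃ c : Fin n → ℤ, ∀ i, v i = ∑ j, B i j * (c j : ℝ)})
    {u v : EuclideanSpace ℝ (Fin n)} (hu : u ∈ L) (hv : v ∈ L) : u - v ∈ L := by
  subst hL
  obtain ⟨c, hc⟩ := hu
  obtain ⟨d, hd⟩ := hv
  refine ⟨c - d, fun i => ?_⟩
  have : (u - v) i = u i - v i := rfl
  rw [this, hc i, hd i, ← Finset.sum_sub_distrib]
  congr 1; funext j
  push_cast [Pi.sub_apply]
  ring

/-- Let `L ⊂ ℝⁿ` be a full-rank lattice, `0 < α < 1/2`, `p` a positive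
integer, `t ∈ ℝⁿ`, `y ∈ L` with `‖y − t‖ < p·α·λ₁(L)`, and `r ∈ L` with `r − y ∈ pL`.
Then `dist((r − t)/p, L) < α·λ₁(L)`, and the unique closest lattice point `c` to
`(r − t)/p` satisfies `y = r − p·c`. -/
theorem bdd_enum_step {n : ℕ}
    (B : Matrix (Fin n) (Fin n) ℝ) (hB : IsUnit B.det)
    (L : Set (EuclideanSpace ℝ (Fin n)))
    (hL : L = {v | ∃ c : Fin n → ℤ, ∀ i, v i = ∑ j, B i j * (c j : ℝ)})
    (lam : ℝ)
    (hlam : IsLeast {r : ℝ | ∃ x ∈ L, x ≠ 0 ∧ ‖x‖ = r} lam)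
    (α : ℝ) (hα0 : 0 < α) (hα : α < 1 / 2)
    (p : ℕ) (hp : 0 < p)
    (t y r : EuclideanSpace ℝ (Fin n))
    (hy : y ∈ L) (hyt : ‖y - t‖ < (p : ℝ) * α * lam)
    (hr : r ∈ L) (hry : ∃ z ∈ L, r - y = (p : ℝ) • z) :
    Metric.infDist ((p : ℝ)⁻¹ • (r - t)) L < α * lam ∧
    ∃ c ∈ L,
      (∀ z ∈ L, z ≠ c →
        ‖c - (p : ℝ)⁻¹ • (r - t)‖ < ‖z - (p : ℝ)⁻¹ • (r - t)‖) ∧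
      y = r - (p : ℝ) • c := by
  obtain ⟨z, hz, hrz⟩ := hry
  have hp0 : (0 : ℝ) < (p : ℝ) := by exact_mod_cast hp
  have hlam0 : 0 < lam := by
    nlinarith [norm_nonneg (y - t), mul_pos hp0 hα0]
  set x := (p : ℝ)⁻¹ • (r - t) with hx
  have hkey : z - x = -((p : ℝ)⁻¹ • (y - t)) := by
    have : r - t = (p : ℝ) • z + (y - t) := by
      have : r - y = (p : ℝ) • z := hrz
      abel_nf
      abel_nf at this
      linear_combination (norm := module) this
    rw [hx, this, smul_add, smul_smul, inv_mul_cancel₀ (ne_of_gt hp0), one_smul]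
    abel
  have hzx : ‖z - x‖ = (p : ℝ)⁻¹ * ‖y - t‖ := by
    rw [hkey, norm_neg, norm_smul, Real.norm_eq_abs, abs_of_pos (by positivity)]
  have hzxlt : ‖z - x‖ < α * lam := by
    rw [hzx]
    calc (p : ℝ)⁻¹ * ‖y - t‖ < (p : ℝ)⁻¹ * ((p : ℝ) * α * lam) := by
          apply mul_lt_mul_of_pos_left hyt (by positivity)
      _ = α * lam := by field_simp
  have hyr : y = r - (p : ℝ) • z := by
    have := hrz
    linear_combination (norm := module) -this
  refine ⟨?_, z, hz, ?_, hyr⟩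
  · calc Metric.infDist x L ≤ dist x z := Metric.infDist_le_dist_of_mem hz
      _ = ‖z - x‖ := by rw [dist_eq_norm, norm_sub_rev]
      _ < α * lam := hzxlt
  · intro w hw hwz
    have hsub : w - z ∈ L := lattice_sub_mem B L hL hw hz
    have hne : w - z ≠ 0 := sub_ne_zero.mpr hwz
    have hlb : lam ≤ ‖w - z‖ := hlam.2 ⟨w - z, hsub, hne, rfl⟩
    have htri : ‖w - z‖ ≤ ‖w - x‖ + ‖z - x‖ := by
      calc ‖w - z‖ = ‖(w - x) - (z - x)‖ := by abel_nf
        _ ≤ ‖w - x‖ + ‖z - x‖ := norm_sub_le _ _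
    have h2 : 2 * (α * lam) < lam := by nlinarith
    linarith
end

section
/- Let L ⊂ ℝⁿ be a full-rank lattice with basis matrix B ∈ ℝ^{n×n} (so L = {Bx : x ∈ ℤⁿ}), let t ∈ ℝⁿ, let 0 < α < 1/2, and let p be a positive integer. Then for every lattice point y ∈ L with ‖y − t‖ < p·α·λ1(L) there exists s ∈ {0,1,…,p−1}ⁿ such that dist((Bs − t)/p, L) < α·λ1(L) and y = Bs − p·c, where c ∈ L is the unique closest lattice point to (Bs − t)/p. In particular, the enumeration that ranges over all s ∈ {0,…,p−1}ⁿ and outputs Bs − p·c collects every lattice point within distance p·α·λ1(L) of t. -/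
/-- Enumeration via coset representatives: for a full-rank lattice
`L = {Bx : x ∈ ℤⁿ}`, `0 < α < 1/2`, a positive integer `p`, and any `y ∈ L` with
`‖y − t‖ < p·α·λ₁(L)`, there is `s ∈ {0,…,p−1}ⁿ` such that
`dist((Bs − t)/p, L) < α·λ₁(L)` and `y = Bs − p·c` where `c` is the unique closest
lattice point to `(Bs − t)/p`. -/
theorem enum_collects_all_close_lattice_points {n : ℕ}
    (B : Matrix (Fin n) (Fin n) ℝ) (hB : IsUnit B.det)
    (L : Set (EuclideanSpace ℝ (Fin n)))
    (hL : L = {v | ∃ c : Fin n → ℤ, ∀ i, v i = ∑ j, B i j * (c j : ℝ)})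
    (lam : ℝ)
    (hlam : IsLeast {r : ℝ | ∃ x ∈ L, x ≠ 0 ∧ ‖x‖ = r} lam)
    (α : ℝ) (hα0 : 0 < α) (hα : α < 1 / 2)
    (p : ℕ) (hp : 0 < p)
    (t y : EuclideanSpace ℝ (Fin n))
    (hy : y ∈ L) (hyt : ‖y - t‖ < (p : ℝ) * α * lam) :
    ∃ s : Fin n → ℕ, (∀ i, s i < p) ∧
      ∀ Bs : EuclideanSpace ℝ (Fin n), (∀ i, Bs i = ∑ j, B i j * (s j : ℝ)) →
        Metric.infDist ((p : ℝ)⁻¹ • (Bs - t)) L < α * lam ∧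
        ∃ c ∈ L,
          (∀ z ∈ L, z ≠ c →
            ‖c - (p : ℝ)⁻¹ • (Bs - t)‖ < ‖z - (p : ℝ)⁻¹ • (Bs - t)‖) ∧
          y = Bs - (p : ℝ) • c := by
  subst hL
  obtain ⟨a, ha⟩ := hy
  have hp' : (0 : ℝ) < p := by exact_mod_cast hp
  obtain ⟨x, hxL, hx0, hxn⟩ := hlam.1
  have hlam0 : 0 < lam := hxn ▸ norm_pos_iff.mpr hx0
  have hpz : (p : ℤ) ≠ 0 := by exact_mod_cast hp.ne'
  refine ⟨fun i => (a i % p).toNat, ?_, ?_⟩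
  · intro i
    show (a i % p).toNat < p
    have h1 : a i % p < p := Int.emod_lt_of_pos _ (by exact_mod_cast hp)
    have h2 : 0 ≤ a i % p := Int.emod_nonneg _ hpz
    have h3 : ((a i % p).toNat : ℤ) = a i % p := Int.toNat_of_nonneg h2
    omega
  · intro Bs hBs
    set c : EuclideanSpace ℝ (Fin n) :=
      WithLp.toLp 2 (fun i => ∑ j, B i j * ((-(a j / p) : ℤ) : ℝ)) with hc
    have hcL : c ∈ {v : EuclideanSpace ℝ (Fin n) |
        ∃ c : Fin n → ℤ, ∀ i, v i = ∑ j, B i j * (c j : ℝ)} :=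
      ⟨fun j => -(a j / p), fun i => rfl⟩
    have hyBs : y = Bs - (p : ℝ) • c := by
      ext i
      have h1 : (Bs - (p : ℝ) • c) i = Bs i - (p : ℝ) * c i := rfl
      rw [h1, hBs i, ha i, hc, PiLp.toLp_apply]
      simp only [Finset.mul_sum, ← Finset.sum_sub_distrib]
      apply Finset.sum_congr rfl
      intro j _
      have h2 : ((a j % p).toNat : ℝ) = ((a j % p : ℤ) : ℝ) := by
        have := Int.emod_nonneg (a j) hpz
        exact_mod_cast congrArg (Int.cast : ℤ → ℝ) (Int.toNat_of_nonneg this)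
      rw [h2]
      push_cast
      have h3 : (a j : ℝ) = ((a j % p : ℤ) : ℝ) + ((p : ℤ) : ℝ) * ((a j / p : ℤ) : ℝ) := by
        exact_mod_cast congrArg ((Int.cast : ℤ → ℝ)) (Int.emod_add_mul_ediv (a j) (p : ℤ)).symm
      rw [h3]
      push_cast
      ring
    have hBs' : Bs = y + (p : ℝ) • c := by rw [hyBs]; abel
    have key : c - (p : ℝ)⁻¹ • (Bs - t) = -((p : ℝ)⁻¹ • (y - t)) := by
      rw [hBs']
      match_scalars <;> field_simp <;> ring
    have hcu : ‖c - (p : ℝ)⁻¹ • (Bs - t)‖ < α * lam := by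
      rw [key, norm_neg, norm_smul, Real.norm_eq_abs, abs_of_pos (inv_pos.mpr hp')]
      rw [inv_mul_lt_iff₀ hp']
      calc ‖y - t‖ < (p : ℝ) * α * lam := hyt
        _ = (p : ℝ) * (α * lam) := by ring
    refine ⟨?_, c, hcL, ?_, hyBs⟩
    · refine lt_of_le_of_lt (Metric.infDist_le_dist_of_mem hcL) ?_
      rw [dist_eq_norm, norm_sub_rev]
      exact hcu
    · intro z hz hzc
      obtain ⟨b, hb⟩ := hz
      have hzcL : z - c ∈ {v : EuclideanSpace ℝ (Fin n) |
          ∃ c : Fin n → ℤ, ∀ i, v i = ∑ j, B i j * (c j : ℝ)} := by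
        refine ⟨fun j => b j + (a j / p), fun i => ?_⟩
        have h1 : (z - c) i = z i - c i := rfl
        rw [h1, hb i, hc, PiLp.toLp_apply]
        simp only [← Finset.sum_sub_distrib]
        apply Finset.sum_congr rfl
        intro j _
        push_cast
        ring
      have hzc0 : z - c ≠ 0 := sub_ne_zero.mpr hzc
      have hzcn : lam ≤ ‖z - c‖ := hlam.2 ⟨z - c, hzcL, hzc0, rfl⟩
      have htri : ‖z - c‖ ≤ ‖z - (p : ℝ)⁻¹ • (Bs - t)‖ + ‖c - (p : ℝ)⁻¹ • (Bs - t)‖ := by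
        have : z - c = (z - (p : ℝ)⁻¹ • (Bs - t)) - (c - (p : ℝ)⁻¹ • (Bs - t)) := by abel
        rw [this]
        exact norm_sub_le _ _
      nlinarith [hcu, hzcn, htri, hlam0, hα, hα0]
end

section
/- Let L ⊂ ℝⁿ be a full-rank lattice, t ∈ ℝⁿ, and p a positive integer. Then the set {y ∈ L : ‖y − t‖ < (p/2)·λ1(L)} has at most pⁿ elements; indeed, any two distinct lattice points in this set lie in distinct cosets of pL in L. -/
/-- For a full-rank lattice `L ⊂ ℝⁿ`, `t ∈ ℝⁿ` and a positive integer
`p`, the set `{y ∈ L : ‖y − t‖ < (p/2)·λ₁(L)}` has at most `pⁿ` elements; indeed any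
two distinct lattice points in this set lie in distinct cosets of `pL` in `L`. -/
theorem ball_lattice_points_card_le {n : ℕ}
    (B : Matrix (Fin n) (Fin n) ℝ) (hB : IsUnit B.det)
    (L : Set (EuclideanSpace ℝ (Fin n)))
    (hL : L = {v | ∃ c : Fin n → ℤ, ∀ i, v i = ∑ j, B i j * (c j : ℝ)})
    (lam : ℝ)
    (hlam : IsLeast {r : ℝ | ∃ x ∈ L, x ≠ 0 ∧ ‖x‖ = r} lam)
    (p : ℕ) (hp : 0 < p)
    (t : EuclideanSpace ℝ (Fin n)) :
    ({y ∈ L | ‖y - t‖ < ((p : ℝ) / 2) * lam}).Finite ∧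
    ({y ∈ L | ‖y - t‖ < ((p : ℝ) / 2) * lam}).ncard ≤ p ^ n ∧
    (∀ y ∈ {y ∈ L | ‖y - t‖ < ((p : ℝ) / 2) * lam},
     ∀ z ∈ {y ∈ L | ‖y - t‖ < ((p : ℝ) / 2) * lam},
      y ≠ z → ¬ ∃ w ∈ L, y - z = (p : ℝ) • w) := by
  haveI : NeZero p := ⟨hp.ne'⟩
  set S : Set (EuclideanSpace ℝ (Fin n)) :=
    {y ∈ L | ‖y - t‖ < ((p : ℝ) / 2) * lam} with hS
  have hlam_le : ∀ x ∈ L, x ≠ 0 → lam ≤ ‖x‖ := fun x hx hx0 => hlam.2 ⟨x, hx, hx0, rfl⟩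
  have hp' : (0:ℝ) < p := by exact_mod_cast hp
  -- key: two points of S in the same coset of pL are equal
  have key : ∀ y ∈ S, ∀ z ∈ S, (∃ w ∈ L, y - z = (p:ℝ) • w) → y = z := by
    rintro y ⟨hyL, hyt⟩ z ⟨hzL, hzt⟩ ⟨w, hwL, hyz⟩
    by_contra hne
    have hw0 : w ≠ 0 := by
      rintro rfl
      rw [smul_zero] at hyz
      exact hne (sub_eq_zero.mp hyz)
    have h1 : lam ≤ ‖w‖ := hlam_le w hwL hw0
    have h2 : ‖y - z‖ = (p:ℝ) * ‖w‖ := by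
      rw [hyz, norm_smul]
      simp
    have h3 : ‖y - z‖ ≤ ‖y - t‖ + ‖z - t‖ := by
      have := norm_sub_le (y - t) (z - t)
      simpa using this
    nlinarith [h1, h2, h3, hyt, hzt]
  subst hL
  -- coordinates
  have hcoord : ∀ y : S, ∃ c : Fin n → ℤ, ∀ i, (y : EuclideanSpace ℝ (Fin n)) i
      = ∑ j, B i j * (c j : ℝ) := fun y => y.2.1
  classical
  let f : S → (Fin n → ZMod p) := fun y i => ((hcoord y).choose i : ZMod p)
  have hf : Function.Injective f := by
    intro y z h
    set cy := (hcoord y).choose with hcydef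
    have hcy := (hcoord y).choose_spec
    set cz := (hcoord z).choose with hczdef
    have hcz := (hcoord z).choose_spec
    have hmod : ∀ j, ((cy j : ZMod p) = (cz j : ZMod p)) := fun j => congrFun h j
    have hdvd : ∀ j, (p:ℤ) ∣ cy j - cz j := by
      intro j
      have h0 : ((cy j - cz j : ℤ) : ZMod p) = 0 := by
        push_cast
        rw [hmod j]
        ring
      exact (ZMod.intCast_zmod_eq_zero_iff_dvd _ p).mp h0
    set d : Fin n → ℤ := fun j => (cy j - cz j) / p with hd
    have hpd : ∀ j, (p:ℤ) * d j = cy j - cz j := fun j => Int.mul_ediv_cancel' (hdvd j)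
    set w : EuclideanSpace ℝ (Fin n) := WithLp.toLp 2 (fun i => ∑ j, B i j * ((d j : ℤ) : ℝ)) with hw
    have hwL : w ∈ {v : EuclideanSpace ℝ (Fin n) |
        ∃ c : Fin n → ℤ, ∀ i, v i = ∑ j, B i j * (c j : ℝ)} := ⟨d, fun i => rfl⟩
    have heq : (y : EuclideanSpace ℝ (Fin n)) - z = (p:ℝ) • w := by
      ext i
      have hsmul : ((p:ℝ) • w) i = (p:ℝ) * w i := rfl
      have hsub : ((y : EuclideanSpace ℝ (Fin n)) - z) i
          = (y : EuclideanSpace ℝ (Fin n)) i - (z : EuclideanSpace ℝ (Fin n)) i := rfl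
      rw [hsub, hsmul, hcy i, hcz i, hw, PiLp.toLp_apply, ← Finset.sum_sub_distrib, Finset.mul_sum]
      apply Finset.sum_congr rfl
      intro j _
      have hcast : ((cy j : ℝ)) - (cz j : ℝ) = (p:ℝ) * (d j : ℝ) := by
        exact_mod_cast congrArg (fun x : ℤ => (x : ℝ)) (hpd j).symm
      show B i j * (cy j : ℝ) - B i j * (cz j : ℝ) = (p:ℝ) * (B i j * (d j : ℝ))
      rw [← mul_sub, hcast]
      ring
    exact Subtype.ext (key y y.2 z z.2 ⟨w, hwL, heq⟩)
  haveI : Finite S := Finite.of_injective f hf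
  refine ⟨Set.toFinite S, ?_, ?_⟩
  · have h1 : Nat.card S ≤ Nat.card (Fin n → ZMod p) := Nat.card_le_card_of_injective f hf
    have h2 : Nat.card (Fin n → ZMod p) = p ^ n := by
      simp [Nat.card_eq_fintype_card, ZMod.card]
    rw [← Nat.card_coe_set_eq]
    omega
  · intro y hy z hz hne hex
    exact hne (key y hy z hz hex)
end

section
/- Let L ⊂ ℝⁿ be a full-rank lattice with basis matrix B ∈ ℝ^{n×n}, let 0 < α < 1/2, and let p be a positive integer with p·α > 1. Then there exists s ∈ {0,1,…,p−1}ⁿ such that dist(Bs/p, L) < α·λ1(L) and the vector y = Bs − p·c, where c ∈ L is the unique closest lattice point to Bs/p, is a nonzero lattice vector with ‖y‖ = λ1(L). That is, the enumeration over all pⁿ coset representatives (with target t = 0) produces a shortest nonzero vector of L. -/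
/-- Solving SVP by enumeration: for a full-rank lattice `L` with basis
matrix `B`, `0 < α < 1/2` and a positive integer `p` with `p·α > 1`, there exists
`s ∈ {0,…,p−1}ⁿ` such that `dist(Bs/p, L) < α·λ₁(L)` and, with `c` the unique closest
lattice point to `Bs/p`, the vector `y = Bs − p·c` is a nonzero lattice vector of
norm `λ₁(L)`. -/
theorem enum_finds_shortest_vector {n : ℕ}
    (B : Matrix (Fin n) (Fin n) ℝ) (hB : IsUnit B.det)
    (L : Set (EuclideanSpace ℝ (Fin n)))
    (hL : L = {v | ∃ c : Fin n → ℤ, ∀ i, v i = ∑ j, B i j * (c j : ℝ)})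
    (lam : ℝ)
    (hlam : IsLeast {r : ℝ | ∃ x ∈ L, x ≠ 0 ∧ ‖x‖ = r} lam)
    (α : ℝ) (hα0 : 0 < α) (hα : α < 1 / 2)
    (p : ℕ) (hp : 0 < p) (hpα : 1 < (p : ℝ) * α) :
    ∃ s : Fin n → ℕ, (∀ i, s i < p) ∧
      ∀ Bs : EuclideanSpace ℝ (Fin n), (∀ i, Bs i = ∑ j, B i j * (s j : ℝ)) →
        Metric.infDist ((p : ℝ)⁻¹ • Bs) L < α * lam ∧
        ∃ c ∈ L,
          (∀ z ∈ L, z ≠ c →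
            ‖c - (p : ℝ)⁻¹ • Bs‖ < ‖z - (p : ℝ)⁻¹ • Bs‖) ∧
          (Bs - (p : ℝ) • c ∈ L ∧ Bs - (p : ℝ) • c ≠ 0 ∧
            ‖Bs - (p : ℝ) • c‖ = lam) := by
  subst hL
  obtain ⟨⟨v, hvL, hv0, hvnorm⟩, hlb⟩ := hlam
  have hlam_pos : 0 < lam := by
    rw [← hvnorm]; exact norm_pos_iff.mpr hv0
  have hpR : (0 : ℝ) < p := by exact_mod_cast hp
  have hpne : (p : ℝ) ≠ 0 := ne_of_gt hpR
  have hinv : (p : ℝ)⁻¹ < α := by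
    rw [inv_lt_iff_one_lt_mul₀ hpR]; linarith
  have hp2 : (2 : ℝ) < p := by nlinarith
  obtain ⟨c₀, hc₀⟩ := hvL
  set k : Fin n → ℤ := fun j => -(c₀ j / (p : ℤ)) with hk
  set s : Fin n → ℕ := fun j => (c₀ j % (p : ℤ)).toNat with hs
  have hpZ : (0 : ℤ) < (p : ℤ) := by exact_mod_cast hp
  refine ⟨s, fun i => ?_, fun Bs hBs => ?_⟩
  · have h1 : c₀ i % (p : ℤ) < p := Int.emod_lt_of_pos _ hpZ
    have h2 : 0 ≤ c₀ i % (p : ℤ) := Int.emod_nonneg _ (ne_of_gt hpZ)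
    simp only [hs]; omega
  -- the lattice point c
  set cvec : EuclideanSpace ℝ (Fin n) := WithLp.toLp 2 (fun i => ∑ j, B i j * (k j : ℝ)) with hcvec
  have hcL : cvec ∈ {v : EuclideanSpace ℝ (Fin n) |
      ∃ c : Fin n → ℤ, ∀ i, v i = ∑ j, B i j * (c j : ℝ)} := ⟨k, fun i => rfl⟩
  -- key decomposition Bs = v + p • c
  have hsZ : ∀ j, ((s j : ℤ) : ℝ) = (c₀ j : ℝ) + (p : ℝ) * (k j : ℝ) := by
    intro j
    have h2 : 0 ≤ c₀ j % (p : ℤ) := Int.emod_nonneg _ (ne_of_gt hpZ)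
    have : ((s j : ℕ) : ℤ) = c₀ j + (p : ℤ) * k j := by
      simp only [hs, hk, Int.toNat_of_nonneg h2]
      rw [Int.emod_def]; ring
    exact_mod_cast this
  have key : Bs = v + (p : ℝ) • cvec := by
    ext i
    have happ : (v + (p : ℝ) • cvec) i = v i + (p : ℝ) * cvec i := rfl
    rw [happ, hBs i, hc₀ i]
    simp only [hcvec, PiLp.toLp_apply]
    rw [Finset.mul_sum, ← Finset.sum_add_distrib]
    refine Finset.sum_congr rfl fun j _ => ?_
    have := hsZ j
    push_cast at this ⊢
    rw [this]; ring
  have hwc : (p : ℝ)⁻¹ • Bs - cvec = (p : ℝ)⁻¹ • v := by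
    rw [key, smul_add, smul_smul, inv_mul_cancel₀ hpne, one_smul]
    abel
  have hnormv : ‖(p : ℝ)⁻¹ • v‖ = (p : ℝ)⁻¹ * lam := by
    rw [norm_smul, hvnorm, Real.norm_eq_abs, abs_of_pos (inv_pos.mpr hpR)]
  -- members of L are closed under subtraction
  have hsub : ∀ z ∈ {v : EuclideanSpace ℝ (Fin n) |
      ∃ c : Fin n → ℤ, ∀ i, v i = ∑ j, B i j * (c j : ℝ)},
      z - cvec ∈ {v : EuclideanSpace ℝ (Fin n) |
      ∃ c : Fin n → ℤ, ∀ i, v i = ∑ j, B i j * (c j : ℝ)} := by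
    rintro z ⟨cz, hcz⟩
    refine ⟨fun j => cz j - k j, fun i => ?_⟩
    have happ : (z - cvec) i = z i - cvec i := rfl
    rw [happ, hcz i]
    simp only [hcvec, PiLp.toLp_apply]
    rw [← Finset.sum_sub_distrib]
    refine Finset.sum_congr rfl fun j _ => ?_
    push_cast
    ring
  constructor
  · calc Metric.infDist ((p : ℝ)⁻¹ • Bs) _ ≤ dist ((p : ℝ)⁻¹ • Bs) cvec :=
          Metric.infDist_le_dist_of_mem hcL
      _ = (p : ℝ)⁻¹ * lam := by rw [dist_eq_norm, hwc, hnormv]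
      _ < α * lam := by nlinarith
  · refine ⟨cvec, hcL, fun z hz hzc => ?_, ?_, ?_, ?_⟩
    · have h1 : ‖cvec - (p : ℝ)⁻¹ • Bs‖ = (p : ℝ)⁻¹ * lam := by
        rw [← norm_neg, neg_sub, hwc, hnormv]
      have hzcL := hsub z hz
      have hzc0 : z - cvec ≠ 0 := sub_ne_zero.mpr hzc
      have hzcnorm : lam ≤ ‖z - cvec‖ := hlb ⟨z - cvec, hzcL, hzc0, rfl⟩
      have h2 : z - (p : ℝ)⁻¹ • Bs = (z - cvec) - ((p : ℝ)⁻¹ • Bs - cvec) := by abel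
      have h3 : ‖z - cvec‖ - ‖(p : ℝ)⁻¹ • Bs - cvec‖ ≤ ‖z - (p : ℝ)⁻¹ • Bs‖ := by
        rw [h2]; exact norm_sub_norm_le _ _ |>.trans_eq' (by rw [norm_sub_rev]) |>.trans
          (le_of_eq rfl)
      rw [h1]
      have h4 : ‖(p : ℝ)⁻¹ • Bs - cvec‖ = (p : ℝ)⁻¹ * lam := by rw [hwc, hnormv]
      rw [h4] at h3
      have : 2 * ((p : ℝ)⁻¹ * lam) < lam := by
        rw [← mul_assoc]
        have : 2 * (p : ℝ)⁻¹ < 1 := by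
          rw [← div_eq_mul_inv, div_lt_one hpR]; linarith
        nlinarith
      linarith
    · have : Bs - (p : ℝ) • cvec = v := by rw [key]; abel
      rw [this]; exact ⟨c₀, hc₀⟩
    · have : Bs - (p : ℝ) • cvec = v := by rw [key]; abel
      rw [this]; exact hv0
    · have : Bs - (p : ℝ) • cvec = v := by rw [key]; abel
      rw [this]; exact hvnorm
end
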